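/- If |H| is a unit in A, then the map φ ↦ (g ↦ (1/|H|)·φ(gH)) is an R-algebra isomorphism from the skew Hecke algebra H_R(G,H,A,α) onto the subalgebra Maps(G,A)^{H×H} = {Φ : G → A | Φ(hgh') = α_h Φ(g) for all h,h' ∈ H} of the skew group algebra Maps(G,A) ≅ A ⋊ G with convolution product (Φ*Ψ)(g) = Σ_{k∈G} Φ(k) α_k Ψ(k⁻¹g). -/
import Mathlib


open scoped BigOperators

def SkewHecke.IsInv {R A G : Type*} [CommRing R] [Ring A] [Algebra R A] [Group G]
    (H : Subgroup G) (α : G →* (A ≃ₐ[R] A)) (φ : G ⧸ H → A) : Prop :=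
  ∀ h ∈ H, ∀ g : G, φ (QuotientGroup.mk (h * g)) = α h (φ (QuotientGroup.mk g))

def SkewHecke.IsSection {G : Type*} [Group G] {H : Subgroup G} (s : G ⧸ H → G) : Prop :=
  ∀ c : G ⧸ H, QuotientGroup.mk (s c) = c

/-- Convolution product on the skew Hecke algebra `Maps(G/H,A)^H`. -/
noncomputable def SkewHecke.conv {R A G : Type*} [CommRing R] [Ring A] [Algebra R A] [Group G]
    (H : Subgroup G) [Fintype (G ⧸ H)] (α : G →* (A ≃ₐ[R] A))
    (s : G ⧸ H → G) (φ ψ : G ⧸ H → A) : G ⧸ H → A :=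
  fun x => ∑ c : G ⧸ H, φ c * α (s c) (ψ ((s c)⁻¹ • x))

/-- Convolution product on the skew group algebra `Maps(G,A) ≅ A ⋊ G`. -/
noncomputable def SkewHecke.convG {R A G : Type*} [CommRing R] [Ring A] [Algebra R A] [Group G]
    [Fintype G] (α : G →* (A ≃ₐ[R] A)) (Φ Ψ : G → A) : G → A :=
  fun g => ∑ k : G, Φ k * α k (Ψ (k⁻¹ * g))

/-- Auxiliary equivalence `(G ⧸ H) × H ≃ G` coming from a section `s`. -/
def SkewHecke.cosetEquiv {G : Type*} [Group G] (H : Subgroup G) (s : G ⧸ H → G)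
    (hs : SkewHecke.IsSection s) : (G ⧸ H) × H ≃ G where
  toFun p := s p.1 * (p.2 : G)
  invFun g := (QuotientGroup.mk g,
    ⟨(s (QuotientGroup.mk g))⁻¹ * g, QuotientGroup.eq.mp (hs (QuotientGroup.mk g))⟩)
  left_inv p := by
    have h1 : QuotientGroup.mk (s p.1 * (p.2 : G)) = p.1 := by
      rw [QuotientGroup.mk_mul_of_mem _ p.2.2, hs]
    refine Prod.ext h1 (Subtype.ext ?_)
    show (s (QuotientGroup.mk (s p.1 * (p.2 : G))))⁻¹ * (s p.1 * (p.2 : G)) = (p.2 : G)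
    rw [h1, inv_mul_cancel_left]
  right_inv g := mul_inv_cancel_left _ _

/-- If `|H|` is a unit in `A`, then `φ ↦ (g ↦ |H|⁻¹ · φ(gH))` is an `R`-algebra isomorphism
from the skew Hecke algebra onto the subalgebra `Maps(G,A)^{H×H}` of the skew group algebra
`Maps(G,A) ≅ A ⋊ G` with the convolution product. -/
theorem skewHecke_iso_biInvariant_subalgebra {R A G : Type*} [CommRing R] [Ring A]
    [Algebra R A] [Group G] [Fintype G] (H : Subgroup G) [Fintype H] [Fintype (G ⧸ H)]
    (α : G →* (A ≃ₐ[R] A)) (s : G ⧸ H → G) (hs : SkewHecke.IsSection s)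
    (u : Aˣ) (hu : (u : A) = (Fintype.card H : A)) :
    let e : (G ⧸ H → A) → (G → A) := fun φ g => (↑u⁻¹ : A) * φ (QuotientGroup.mk g)
    Set.BijOn e {φ | SkewHecke.IsInv H α φ}
      {Φ : G → A | ∀ h ∈ H, ∀ h' ∈ H, ∀ g : G, Φ (h * g * h') = α h (Φ g)} ∧
    (∀ φ ψ : G ⧸ H → A, e (φ + ψ) = e φ + e ψ) ∧
    (∀ (r : R) (φ : G ⧸ H → A), e (r • φ) = r • e φ) ∧
    (∀ φ ψ : G ⧸ H → A, SkewHecke.IsInv H α φ → SkewHecke.IsInv H α ψ →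
      e (SkewHecke.conv H α s φ ψ) = SkewHecke.convG α (e φ) (e ψ)) := by
  intro e
  have hcommu : ∀ a : A, Commute (↑u : A) a := fun a => by
    rw [hu]; exact Nat.cast_commute _ a
  have hcomm : ∀ a : A, Commute (↑u⁻¹ : A) a := fun a => (hcommu a).units_inv_left
  have hαu : ∀ g : G, (α g) (↑u : A) = (↑u : A) := fun g => by
    rw [hu]; exact map_natCast _ _
  have halg : ∀ g : G, (α g) (↑u⁻¹ : A) = (↑u⁻¹ : A) := by
    intro g
    have h1 : (α g) (↑u⁻¹ : A) * ↑u = 1 := by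
      rw [← hαu g, ← map_mul, Units.inv_mul, map_one]
    calc (α g) (↑u⁻¹ : A) = (α g) (↑u⁻¹ : A) * (↑u * ↑u⁻¹) := by
          rw [Units.mul_inv, mul_one]
      _ = ((α g) (↑u⁻¹ : A) * ↑u) * ↑u⁻¹ := by rw [mul_assoc]
      _ = ↑u⁻¹ := by rw [h1, one_mul]
  have halgmul : ∀ (g : G) (x : A), α g ((↑u⁻¹ : A) * x) = (↑u⁻¹ : A) * α g x := by
    intro g x; rw [map_mul, halg]
  have hmem : ∀ g : G, (s (QuotientGroup.mk g))⁻¹ * g ∈ H := fun g =>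
    QuotientGroup.eq.mp (hs (QuotientGroup.mk g))
  refine ⟨⟨?_, ?_, ?_⟩, ?_, ?_, ?_⟩
  · -- MapsTo
    intro φ hφ h hh h' hh' g
    show (↑u⁻¹ : A) * φ (QuotientGroup.mk (h * g * h')) = α h ((↑u⁻¹ : A) * φ (QuotientGroup.mk g))
    rw [QuotientGroup.mk_mul_of_mem _ hh', hφ h hh g, halgmul]
  · -- InjOn
    intro φ hφ ψ hψ heq
    funext c
    induction c using QuotientGroup.induction_on with
    | H g =>
      have h1 := congrFun heq g
      simp only [e] at h1
      have h2 := congrArg (fun x => (↑u : A) * x) h1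
      simpa [← mul_assoc, Units.mul_inv] using h2
  · -- SurjOn
    intro Φ hΦ
    refine ⟨fun c => (↑u : A) * Φ (s c), ?_, ?_⟩
    · intro h hh g
      have hk : QuotientGroup.mk (h * s (QuotientGroup.mk g)) =
          (QuotientGroup.mk (h * g) : G ⧸ H) := by
        have h0 : QuotientGroup.mk (h * s (QuotientGroup.mk g)) =
            h • (QuotientGroup.mk (s (QuotientGroup.mk g)) : G ⧸ H) := rfl
        rw [h0, hs]
        rfl
      set k := s (QuotientGroup.mk g) with hkdef
      set k' := s (QuotientGroup.mk (h * g)) with hk'def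
      have hh'' : (h * k)⁻¹ * k' ∈ H := by
        apply QuotientGroup.eq.mp
        rw [hk, hs]
      have hkk' : k' = h * k * ((h * k)⁻¹ * k') := by group
      show (↑u : A) * Φ k' = α h ((↑u : A) * Φ k)
      rw [hkk', hΦ h hh _ hh'' k, map_mul, hαu]
    · funext g
      show (↑u⁻¹ : A) * ((↑u : A) * Φ (s (QuotientGroup.mk g))) = Φ g
      have h1 : s (QuotientGroup.mk g) = 1 * g * ((s (QuotientGroup.mk g))⁻¹ * g)⁻¹ := by group
      rw [← mul_assoc, Units.inv_mul, one_mul, h1,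
        hΦ 1 H.one_mem _ (H.inv_mem (hmem g)) g, map_one]
      rfl
  · intro φ ψ; funext g; simp [e, mul_add]
  · intro r φ; funext g; simp [e, mul_smul_comm]
  · -- multiplicativity
    intro φ ψ hφ hψ
    funext g
    have key : ∀ b y : A, (↑u⁻¹ : A) * b * ((↑u⁻¹ : A) * y)
        = (↑u⁻¹ : A) * (↑u⁻¹ : A) * (b * y) := by
      intro b y
      rw [mul_assoc, ← mul_assoc b, ← (hcomm b).eq, mul_assoc, ← mul_assoc, ← mul_assoc]
    have hinv : ∀ (k : G) (x : A), α k ((α k⁻¹) x) = x := by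
      intro k x
      rw [map_inv, ← AlgEquiv.mul_apply, mul_inv_cancel, AlgEquiv.one_apply]
    have hterm : ∀ (c : G ⧸ H) (h : H),
        (e φ) (s c * (h : G)) * α (s c * (h : G)) ((e ψ) ((s c * (h : G))⁻¹ * g))
          = (↑u⁻¹ : A) * (↑u⁻¹ : A) *
            (φ c * α (s c) (ψ (QuotientGroup.mk ((s c)⁻¹ * g)))) := by
      intro c h
      have h1 : QuotientGroup.mk (s c * (h : G)) = c := by
        rw [QuotientGroup.mk_mul_of_mem _ h.2, hs]
      have h2 : (s c * (h : G))⁻¹ * g = (h : G)⁻¹ * ((s c)⁻¹ * g) := by group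
      have h3 : ψ (QuotientGroup.mk ((h : G)⁻¹ * ((s c)⁻¹ * g)))
          = α (h : G)⁻¹ (ψ (QuotientGroup.mk ((s c)⁻¹ * g))) :=
        hψ _ (H.inv_mem h.2) _
      show (↑u⁻¹ : A) * φ (QuotientGroup.mk (s c * (h : G))) *
          α (s c * (h : G)) ((↑u⁻¹ : A) * ψ (QuotientGroup.mk ((s c * (h : G))⁻¹ * g))) = _
      rw [h1, h2, h3, halgmul, map_mul α, AlgEquiv.mul_apply, hinv, key]
    calc (↑u⁻¹ : A) * SkewHecke.conv H α s φ ψ (QuotientGroup.mk g)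
        = ∑ c : G ⧸ H, (↑u⁻¹ : A) *
            (φ c * α (s c) (ψ (QuotientGroup.mk ((s c)⁻¹ * g)))) := by
          simp only [SkewHecke.conv, Finset.mul_sum, MulAction.Quotient.smul_mk, smul_eq_mul]
      _ = ∑ c : G ⧸ H, ∑ _h : H, (e φ) (s c * ((_h : H) : G)) *
            α (s c * ((_h : H) : G)) ((e ψ) ((s c * ((_h : H) : G))⁻¹ * g)) := by
          refine Finset.sum_congr rfl fun c _ => ?_
          rw [Finset.sum_congr rfl fun h _ => hterm c h, Finset.sum_const, Finset.card_univ,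
            nsmul_eq_mul, ← hu, mul_assoc (↑u⁻¹ : A) (↑u⁻¹ : A),
            ← mul_assoc (↑u : A) (↑u⁻¹ : A), Units.mul_inv, one_mul]
      _ = ∑ p : (G ⧸ H) × H, (e φ) (SkewHecke.cosetEquiv H s hs p) *
            α (SkewHecke.cosetEquiv H s hs p)
              ((e ψ) ((SkewHecke.cosetEquiv H s hs p)⁻¹ * g)) := by
          rw [Fintype.sum_prod_type]; rfl
      _ = ∑ k : G, (e φ) k * α k ((e ψ) (k⁻¹ * g)) :=
          Fintype.sum_equiv (SkewHecke.cosetEquiv H s hs) _ _ fun p => rfl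
      _ = SkewHecke.convG α (e φ) (e ψ) g := rfl
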